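/- For every nonnegative integer s, either there exists k ∈ {1,…,N} such that s = h(p_k), or there exist j ∈ {1,…,n} and an integer l ≥ 0 such that s = h(q_j) + n·l. -/

import Mathlib

open Polynomial Matrix

/-- The height of an `n`-dimensional vector polynomial. -/
noncomputable def vheight (n : ℕ) (r : Fin n → Polynomial ℂ) : WithBot ℕ :=
  Finset.univ.sup fun j : Fin n => n • (r j).degree + ((j : ℕ) : WithBot ℕ)

/-- The class `𝓜(n,N)` of band symmetric matrices with degeneration indices `m`. -/
structure MatrixClassM (n N : ℕ) (A : Matrix (Fin N) (Fin N) ℝ) (m : ℕ → ℕ) : Prop where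
  symm : A.IsSymm
  band : ∀ k l : Fin N, (n : ℤ) < |(k : ℤ) - (l : ℤ)| → A k l = 0
  m_zero : m 0 = 0
  m_last : m n = N
  m_mono : ∀ j < n, m j < m (j + 1)
  m_one : 1 < m 1
  m_le : ∀ j, 1 ≤ j → j ≤ n → m j ≤ N - n + j
  d_pos : ∀ j < n, ∀ k l : Fin N, (l : ℕ) = (k : ℕ) + (n - j) →
      m j < (k : ℕ) + 1 → (k : ℕ) + 1 < m (j + 1) → 0 < A l k
  d_zero : ∀ j < n, ∀ k l : Fin N, (l : ℕ) = (k : ℕ) + (n - j) →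
      m (j + 1) ≤ (k : ℕ) + 1 → (k : ℕ) + 1 ≤ N - n + j → A l k = 0

/-- The rank-one jump matrix `σ_k`. -/
def sigmaJump {n N : ℕ} (αc : Fin N → Fin n → ℂ) (k : Fin N) :
    Matrix (Fin n) (Fin n) ℂ :=
  Matrix.of fun i j => (starRingEnd ℂ) (αc k i) * αc k j

/-- The inner product `⟨r,s⟩_{L²(σ)}` for vector polynomials. -/
noncomputable def L2inner {n N : ℕ} (x : Fin N → ℝ)
    (σ : Fin N → Matrix (Fin n) (Fin n) ℂ) (r s : Fin n → Polynomial ℂ) : ℂ :=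
  ∑ k, ∑ i, ∑ j,
    (starRingEnd ℂ) ((r i).eval ((x k : ℂ))) * σ k i j * (s j).eval ((x k : ℂ))

/-- The interpolation set `𝕊`. -/
def interpSet {n N : ℕ} (z : Fin N → ℂ) (α : Fin N → Fin n → ℂ) :
    Set (Fin n → Polynomial ℂ) :=
  {r | ∀ k, ∑ j, α k j * (r j).eval (z k) = 0}

/-- `𝕄(r_1) + ⋯ + 𝕄(r_m)`. -/
def polySpan {n m : ℕ} (r : Fin m → Fin n → Polynomial ℂ) :
    Set (Fin n → Polynomial ℂ) :=
  {s | ∃ c : Fin m → Polynomial ℂ, s = fun jj => ∑ i, c i * r i jj}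

/-- `𝕄(r_1) + ⋯ + 𝕄(r_{j-1})`. -/
def prevSpan {n : ℕ} (r : Fin n → Fin n → Polynomial ℂ) (j : Fin n) :
    Set (Fin n → Polynomial ℂ) :=
  {s | ∃ c : Fin n → Polynomial ℂ,
      s = fun jj => ∑ i ∈ Finset.univ.filter (fun i => i < j), c i * r i jj}

/-- `r` is a sequence of generators of `S`. -/
def IsGenSeq {n : ℕ} (S : Set (Fin n → Polynomial ℂ))
    (r : Fin n → Fin n → Polynomial ℂ) : Prop :=
  ∀ j : Fin n, r j ≠ 0 ∧ r j ∈ S \ prevSpan r j ∧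
    ∀ s ∈ S \ prevSpan r j, s ≠ 0 → vheight n (r j) ≤ vheight n s


/-! ### Auxiliary combinatorial layer -/

def gfun (n : ℕ) (m : ℕ → ℕ) (i : ℕ) : ℕ :=
  ((Finset.Icc 1 (n-1)).filter (fun j => m j + n < i + j)).card

lemma gfun_le (n : ℕ) (m : ℕ → ℕ) (i : ℕ) : gfun n m i ≤ n - 1 := by
  have := Finset.card_filter_le (Finset.Icc 1 (n-1)) (fun j => m j + n < i + j)
  simpa [gfun, Nat.card_Icc] using this

lemma gfun_mono (n : ℕ) (m : ℕ → ℕ) {i i' : ℕ} (h : i ≤ i') : gfun n m i ≤ gfun n m i' := by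
  apply Finset.card_le_card
  intro j hj
  simp only [Finset.mem_filter] at hj ⊢
  exact ⟨hj.1, by omega⟩

def hgt (n : ℕ) (m : ℕ → ℕ) (i : ℕ) : ℕ :=
  if h : i ≤ n then i - 1 else hgt n m (i - max (n - gfun n m i) 1) + n
termination_by i
decreasing_by omega

lemma hgt_le {n : ℕ} (m : ℕ → ℕ) {i : ℕ} (h : i ≤ n) : hgt n m i = i - 1 := by
  rw [hgt]; simp [h]

lemma hgt_gt {n : ℕ} (m : ℕ → ℕ) {i : ℕ} (hn : 0 < n) (h : n < i) :
    hgt n m i = hgt n m (i - (n - gfun n m i)) + n := by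
  rw [hgt, dif_neg (by omega)]
  congr 2
  have := gfun_le n m i
  omega

section comb
variable {n N : ℕ} {m : ℕ → ℕ}

/-- linear growth of m -/
lemma mlin (hmono : ∀ j < n, m j < m (j+1)) :
    ∀ j j', j ≤ j' → j' ≤ n → m j + j' ≤ m j' + j := by
  intro j j' hjj hj'
  induction j' with
  | zero => have : j = 0 := by omega
            subst this; omega
  | succ t ih =>
    rcases Nat.lt_or_ge j (t+1) with h | h
    · have h1 := hmono t (by omega)
      have := ih (by omega) (by omega)
      omega
    · have : j = t + 1 := by omega
      subst this; omega

lemma m_ge_self (hm0 : m 0 = 0) (hmono : ∀ j < n, m j < m (j+1)) :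
    ∀ j, j ≤ n → j ≤ m j := by
  intro j hj
  induction j with
  | zero => omega
  | succ t ih => have := hmono t (by omega); have := ih (by omega); omega

lemma gfun_lower (hmono : ∀ j < n, m j < m (j+1)) (hm0 : m 0 = 0) {i : ℕ} (hi : n < i) :
    m (gfun n m i) + n < i + gfun n m i := by
  rcases Nat.eq_zero_or_pos (gfun n m i) with h0 | hpos
  · rw [h0, hm0]; omega
  · have hne : ((Finset.Icc 1 (n-1)).filter (fun j => m j + n < i + j)).Nonempty := by
      rw [← Finset.card_pos]; exact hpos
    obtain ⟨j, hjs, hjmax⟩ := Finset.exists_max_image _ id hne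
    have hjmem := Finset.mem_filter.mp hjs
    have hjn : j ≤ n - 1 := (Finset.mem_Icc.mp hjmem.1).2
    have hcard : gfun n m i ≤ j := by
      have hsub : ((Finset.Icc 1 (n-1)).filter (fun t => m t + n < i + t)) ⊆ Finset.Icc 1 j := by
        intro x hx
        have hx1 := Finset.mem_Icc.mp (Finset.mem_filter.mp hx).1
        exact Finset.mem_Icc.mpr ⟨hx1.1, hjmax x hx⟩
      have := Finset.card_le_card hsub
      rw [Nat.card_Icc] at this
      unfold gfun
      omega
    have hlt : m j + n < i + j := hjmem.2
    have hml := mlin hmono (gfun n m i) j hcard (by omega)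
    omega

lemma gfun_upper (hn : 0 < n) (hmono : ∀ j < n, m j < m (j+1)) (hmN : m n = N) {i : ℕ} (hiN : i ≤ N) :
    i + (gfun n m i + 1) ≤ m (gfun n m i + 1) + n := by
  rcases Nat.lt_or_ge (gfun n m i + 1) n with hlt | hge
  · by_contra hcon
    push_neg at hcon
    have hsub : Finset.Icc 1 (gfun n m i + 1) ⊆
        (Finset.Icc 1 (n-1)).filter (fun j => m j + n < i + j) := by
      intro j hj
      have hj' := Finset.mem_Icc.mp hj
      refine Finset.mem_filter.mpr ⟨Finset.mem_Icc.mpr ⟨hj'.1, by omega⟩, ?_⟩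
      have := mlin hmono j (gfun n m i + 1) hj'.2 (by omega)
      omega
    have := Finset.card_le_card hsub
    rw [Nat.card_Icc] at this
    have hg : gfun n m i = ((Finset.Icc 1 (n-1)).filter (fun j => m j + n < i + j)).card := rfl
    omega
  · have hcn : gfun n m i + 1 = n := by have := gfun_le n m i; omega
    have h2 : m (gfun n m i + 1) = N := by rw [hcn, hmN]
    omega

lemma gfun_char (hmono : ∀ j < n, m j < m (j+1)) {i j : ℕ} (hjn : j < n)
    (h1 : m j + n < i + j) (h2 : i + (j+1) ≤ m (j+1) + n) : gfun n m i = j := by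
  have hge : j ≤ gfun n m i := by
    have hsub : Finset.Icc 1 j ⊆ (Finset.Icc 1 (n-1)).filter (fun t => m t + n < i + t) := by
      intro t ht
      have ht' := Finset.mem_Icc.mp ht
      refine Finset.mem_filter.mpr ⟨Finset.mem_Icc.mpr ⟨ht'.1, by omega⟩, ?_⟩
      have := mlin hmono t j ht'.2 (by omega)
      omega
    have := Finset.card_le_card hsub
    rw [Nat.card_Icc] at this
    unfold gfun
    omega
  have hle : gfun n m i ≤ j := by
    by_contra hcon
    push_neg at hcon
    have hne : ((Finset.Icc 1 (n-1)).filter (fun t => m t + n < i + t)).Nonempty := by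
      rw [← Finset.card_pos]; unfold gfun at hcon; omega
    obtain ⟨t, hts, htmax⟩ := Finset.exists_max_image _ id hne
    have htmem := Finset.mem_filter.mp hts
    have htn : t ≤ n - 1 := (Finset.mem_Icc.mp htmem.1).2
    have hcard : gfun n m i ≤ t := by
      have hsub : ((Finset.Icc 1 (n-1)).filter (fun x => m x + n < i + x)) ⊆ Finset.Icc 1 t := by
        intro x hx
        have hx1 := Finset.mem_Icc.mp (Finset.mem_filter.mp hx).1
        exact Finset.mem_Icc.mpr ⟨hx1.1, htmax x hx⟩
      have := Finset.card_le_card hsub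
      rw [Nat.card_Icc] at this
      unfold gfun
      omega
    have := mlin hmono (j+1) t (by omega) (by omega)
    have hlt : m t + n < i + t := htmem.2
    omega
  omega

end comb

section comb2
variable {n N : ℕ} {m : ℕ → ℕ}

lemma hgt_mono (hn : 0 < n) :
    ∀ i', i' ≤ N → ∀ i, 1 ≤ i → i < i' → hgt n m i < hgt n m i' := by
  intro i'
  induction i' using Nat.strong_induction_on with
  | _ i' ih =>
    intro hi'N i hi1 hii
    rcases le_or_gt i' n with hle | hgt'
    · rw [hgt_le m hle, hgt_le m (by omega)]; omega
    · rw [hgt_gt m hn hgt']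
      have hg' := gfun_le n m i'
      rcases lt_trichotomy i (i' - (n - gfun n m i')) with h | h | h
      · have := ih (i' - (n - gfun n m i')) (by omega) (by omega) i hi1 h; omega
      · rw [h]; omega
      · rcases le_or_gt i n with hin | hin
        · rw [hgt_le m hin]; omega
        · rw [hgt_gt m hn hin]
          have hg := gfun_le n m i
          have hgm := gfun_mono n m (le_of_lt hii)
          have := ih (i' - (n - gfun n m i')) (by omega) (by omega)
            (i - (n - gfun n m i)) (by omega) (by omega)
          omega

lemma hgt_le_mono (hn : 0 < n) {i i' : ℕ} (h1 : 1 ≤ i) (h : i ≤ i') (hN : i' ≤ N) :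
    hgt n m i ≤ hgt n m i' := by
  rcases eq_or_lt_of_le h with rfl | hlt
  · exact le_refl _
  · exact le_of_lt (hgt_mono (N := N) hn i' hN i h1 hlt)

/-- segment counter: number of t ∈ [1,n-1] with m t < k -/
def cseg (n : ℕ) (m : ℕ → ℕ) (k : ℕ) : ℕ := gfun n (fun j => m j + j) (k + n)

lemma hm_shift (hmono : ∀ j < n, m j < m (j+1)) :
    ∀ j < n, (fun j => m j + j) j < (fun j => m j + j) (j+1) := by
  intro j hj; have := hmono j hj; simp; omega

/-- basic properties of the segment of a non-exceptional index -/
lemma cseg_props (hn : 0 < n) (hnN : n < N) (hm0 : m 0 = 0) (hmN : m n = N)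
    (hmono : ∀ j < n, m j < m (j+1)) {k : ℕ} (hk1 : 1 ≤ k) (hkN : k ≤ N)
    (hexc : ∀ t, 1 ≤ t → t ≤ n → m t ≠ k) :
    cseg n m k < n ∧ m (cseg n m k) < k ∧ k < m (cseg n m k + 1) := by
  have hlow := gfun_lower (m := fun j => m j + j) (hm_shift hmono) (by simp [hm0]) (i := k + n) (by omega)
  have hup := gfun_upper (N := N + n) (m := fun j => m j + j) hn (hm_shift hmono)
    (by simp [hmN]) (i := k + n) (by omega)
  have hle := gfun_le n (fun j => m j + j) (k + n)
  have hc1 : cseg n m k < n := by unfold cseg; omega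
  refine ⟨hc1, by unfold cseg; omega, ?_⟩
  have hne := hexc (cseg n m k + 1) (by omega) (by omega)
  unfold cseg at hne ⊢
  omega

/-- the chain step: for non-exceptional k, hgt (k + n - cseg k) = hgt k + n -/
lemma hgt_step (hn : 0 < n) (hnN : n < N) (hm0 : m 0 = 0) (hmN : m n = N)
    (hmono : ∀ j < n, m j < m (j+1)) (hmle : ∀ j, 1 ≤ j → j ≤ n → m j ≤ N - n + j)
    {k : ℕ} (hk1 : 1 ≤ k) (hkN : k ≤ N)
    (hexc : ∀ t, 1 ≤ t → t ≤ n → m t ≠ k) :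
    cseg n m k < n ∧ m (cseg n m k) < k ∧ k < m (cseg n m k + 1) ∧
    n < k + n - cseg n m k ∧ k + n - cseg n m k ≤ N ∧
    gfun n m (k + n - cseg n m k) = cseg n m k ∧
    hgt n m (k + n - cseg n m k) = hgt n m k + n := by
  obtain ⟨hc1, hc2, hc3⟩ := cseg_props hn hnN hm0 hmN hmono hk1 hkN hexc
  have hck : cseg n m k < k := by
    have := m_ge_self hm0 hmono (cseg n m k) (by omega)
    omega
  have hiN : k + n - cseg n m k ≤ N := by
    have := hmle (cseg n m k + 1) (by omega) (by omega)
    omega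
  have hgchar : gfun n m (k + n - cseg n m k) = cseg n m k := by
    apply gfun_char hmono hc1 <;> omega
  refine ⟨hc1, hc2, hc3, by omega, hiN, hgchar, ?_⟩
  rw [hgt_gt m hn (by omega), hgchar]
  congr 2
  omega

/-- existence of a large element in the gfun filter -/
lemma gfun_elem {i : ℕ} (hpos : 0 < gfun n m i) :
    ∃ j, 1 ≤ j ∧ j ≤ n - 1 ∧ gfun n m i ≤ j ∧ m j + n < i + j := by
  have hne : ((Finset.Icc 1 (n-1)).filter (fun j => m j + n < i + j)).Nonempty := by
    rw [← Finset.card_pos]; exact hpos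
  obtain ⟨j, hjs, hjmax⟩ := Finset.exists_max_image _ id hne
  have hjmem := Finset.mem_filter.mp hjs
  have hj' := Finset.mem_Icc.mp hjmem.1
  refine ⟨j, hj'.1, hj'.2, ?_, hjmem.2⟩
  have hsub : ((Finset.Icc 1 (n-1)).filter (fun t => m t + n < i + t)) ⊆ Finset.Icc 1 j := by
    intro x hx
    have hx1 := Finset.mem_Icc.mp (Finset.mem_filter.mp hx).1
    exact Finset.mem_Icc.mpr ⟨hx1.1, hjmax x hx⟩
  have := Finset.card_le_card hsub
  rw [Nat.card_Icc] at this
  unfold gfun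
  omega

/-- the q-row domination lemma -/
lemma hgt_q (hn : 0 < n) (hm0 : m 0 = 0) (hmN : m n = N)
    (hmono : ∀ j < n, m j < m (j+1))
    {t l : ℕ} (ht1 : 1 ≤ t) (htn : t ≤ n) (hl1 : m t < l) (hl2 : l + t ≤ m t + n)
    (hlN : l ≤ N) : hgt n m l < hgt n m (m t) + n := by
  have hmtN : m t ≤ N := by
    have := mlin hmono t n htn (le_refl n); omega
  have hmt1 : 1 ≤ m t := by
    have := m_ge_self hm0 hmono t htn; omega
  rcases le_or_gt l n with hln | hln
  · rw [hgt_le m hln]; omega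
  · rw [hgt_gt m hn hln]
    have hglt : gfun n m l ≤ t - 1 := by
      by_contra hcon
      push_neg at hcon
      obtain ⟨j, hj1, hj2, hj3, hj4⟩ := gfun_elem (n := n) (m := m) (i := l) (by omega)
      have := mlin hmono t j (by omega) (by omega)
      omega
    have hg := gfun_le n m l
    have hσ : l - (n - gfun n m l) < m t := by omega
    have := hgt_mono (N := N) (m := m) hn (m t) hmtN (l - (n - gfun n m l)) (by omega) hσ
    omega

/-- coverage: every s is a p-height or a shifted q-height -/
lemma hgt_cover (hn : 0 < n) (hnN : n < N) (hm0 : m 0 = 0) (hmN : m n = N)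
    (hmono : ∀ j < n, m j < m (j+1)) (hmle : ∀ j, 1 ≤ j → j ≤ n → m j ≤ N - n + j) :
    ∀ s : ℕ, (∃ i, 1 ≤ i ∧ i ≤ N ∧ hgt n m i = s) ∨
      (∃ t l, 1 ≤ t ∧ t ≤ n ∧ s = hgt n m (m t) + n + n * l) := by
  intro s
  induction s using Nat.strong_induction_on with
  | _ s ih =>
    rcases le_or_gt n s with hs | hs
    · rcases ih (s - n) (by omega) with ⟨i, h1, hN, hval⟩ | ⟨t, l, ht1, htn, hval⟩
      · by_cases hex : ∃ t, 1 ≤ t ∧ t ≤ n ∧ m t = i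
        · obtain ⟨t, ht1, htn, hmt⟩ := hex
          right
          exact ⟨t, 0, ht1, htn, by rw [hmt, hval]; omega⟩
        · push_neg at hex
          obtain ⟨_, _, _, _, hiN, _, hstep⟩ := hgt_step hn hnN hm0 hmN hmono hmle h1 hN
            (fun t a b => hex t a b)
          left
          exact ⟨i + n - cseg n m i, by omega, hiN, by omega⟩
      · right
        have hr : n * (l + 1) = n * l + n := by ring
        exact ⟨t, l + 1, ht1, htn, by omega⟩
    · left
      exact ⟨s + 1, by omega, by omega, by rw [hgt_le m (by omega)]; omega⟩

end comb2

/-! ### Auxiliary vheight lemmas -/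


lemma nsmul_bot {n : ℕ} (hn : 0 < n) : n • (⊥ : WithBot ℕ) = ⊥ := by
  cases n with
  | zero => omega
  | succ k => rw [succ_nsmul]; exact WithBot.add_bot _

lemma nsmul_coe (n c : ℕ) : n • ((c : ℕ) : WithBot ℕ) = ((n * c : ℕ) : WithBot ℕ) := by
  induction n with
  | zero => simp
  | succ k ih =>
    rw [succ_nsmul, ih, show (k+1) * c = k * c + c by ring, Nat.cast_add]

lemma nsmul_mono {n : ℕ} {d d' : WithBot ℕ} (h : d ≤ d') : n • d ≤ n • d' :=
  nsmul_le_nsmul_right h n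

lemma le_vheight {n : ℕ} (r : Fin n → Polynomial ℂ) (j : Fin n) :
    n • (r j).degree + ((j : ℕ) : WithBot ℕ) ≤ vheight n r := by
  unfold vheight
  exact Finset.le_sup (f := fun j : Fin n => n • (r j).degree + ((j:ℕ) : WithBot ℕ))
    (Finset.mem_univ j)

lemma term_lt {n : ℕ} (hn : 0 < n) {d d' : WithBot ℕ} {j : ℕ}
    (h : n • d + (j : WithBot ℕ) < n • d' + (j : WithBot ℕ)) : d < d' := by
  cases d' with
  | bot =>
    rw [nsmul_bot hn, WithBot.bot_add] at h
    exact absurd h (by simp)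
  | coe c' =>
    cases d with
    | bot => exact WithBot.bot_lt_coe _
    | coe c =>
      rw [← Nat.cast_withBot c, ← Nat.cast_withBot c', nsmul_coe, nsmul_coe,
        ← Nat.cast_add, ← Nat.cast_add, Nat.cast_lt] at h
      rw [← Nat.cast_withBot c, ← Nat.cast_withBot c', Nat.cast_lt]
      rcases Nat.lt_or_ge c c' with h' | h'
      · exact h'
      · exfalso; have := Nat.mul_le_mul_left n h'; omega

lemma vh_zero {n : ℕ} (hn : 0 < n) : vheight n (fun _ => 0) = ⊥ := by
  refine le_antisymm (Finset.sup_le fun j _ => ?_) bot_le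
  rw [degree_zero, nsmul_bot hn, WithBot.bot_add]

lemma vh_sub_le {n : ℕ} (r s : Fin n → Polynomial ℂ) :
    vheight n (fun jj => r jj - s jj) ≤ max (vheight n r) (vheight n s) := by
  refine Finset.sup_le fun j _ => ?_
  calc n • (r j - s j).degree + ((j:ℕ) : WithBot ℕ)
      ≤ n • ((r j).degree ⊔ (s j).degree) + ((j:ℕ) : WithBot ℕ) :=
        add_le_add_left (nsmul_mono (degree_sub_le _ _)) _
    _ = (n • (r j).degree + ((j:ℕ) : WithBot ℕ)) ⊔ (n • (s j).degree + ((j:ℕ) : WithBot ℕ)) := by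
        rw [Monotone.map_max (f := fun x : WithBot ℕ => n • x) (fun _ _ h => nsmul_mono h),
          max_add_add_right]
    _ ≤ max (vheight n r) (vheight n s) :=
        max_le_max (le_vheight r j) (le_vheight s j)

lemma vh_add_le {n : ℕ} (r s : Fin n → Polynomial ℂ) :
    vheight n (fun jj => r jj + s jj) ≤ max (vheight n r) (vheight n s) := by
  have h1 := vh_sub_le r (fun jj => - s jj)
  have h2 : vheight n (fun jj => - s jj) = vheight n s :=
    Finset.sup_congr rfl fun j _ => by rw [degree_neg]
  rw [h2] at h1
  simpa [sub_neg_eq_add] using h1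

lemma vh_sum_lt {n : ℕ} (hn : 0 < n) {ι : Type*} (c : ℕ) (s : Finset ι)
    (f : ι → Fin n → Polynomial ℂ) (h : ∀ l ∈ s, vheight n (f l) < (c : WithBot ℕ)) :
    vheight n (fun jj => ∑ l ∈ s, f l jj) < (c : WithBot ℕ) := by
  classical
  induction s using Finset.cons_induction with
  | empty =>
    simp only [Finset.sum_empty]
    rw [vh_zero hn]
    exact_mod_cast WithBot.bot_lt_coe c
  | cons a s ha ih =>
    have h1 : vheight n (fun jj => f a jj + ∑ l ∈ s, f l jj) ≤
        max (vheight n (f a)) (vheight n (fun jj => ∑ l ∈ s, f l jj)) := vh_add_le _ _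
    have h2 := ih (fun l hl => h l (Finset.mem_cons_of_mem hl))
    have h3 := h a (Finset.mem_cons_self a s)
    simp only [Finset.sum_cons]
    exact lt_of_le_of_lt h1 (max_lt h3 h2)

set_option maxHeartbeats 2000000 in
lemma vh_sub_eq {n : ℕ} (hn : 0 < n) {r s : Fin n → Polynomial ℂ}
    (h : vheight n s < vheight n r) :
    vheight n (fun jj => r jj - s jj) = vheight n r := by
  have hub := vh_sub_le r s
  rw [max_eq_left (le_of_lt h)] at hub
  refine le_antisymm hub ?_
  have hnonempty : (Finset.univ : Finset (Fin n)).Nonempty := by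
    have : Nonempty (Fin n) := ⟨⟨0, hn⟩⟩
    exact Finset.univ_nonempty
  obtain ⟨j₀, _, hvr⟩ := Finset.exists_mem_eq_sup Finset.univ hnonempty
    (fun j : Fin n => n • (r j).degree + ((j:ℕ) : WithBot ℕ))
  have hvr' : vheight n r = n • (r j₀).degree + ((j₀:ℕ) : WithBot ℕ) := hvr
  have hdeg : (s j₀).degree < (r j₀).degree := by
    apply term_lt hn (j := (j₀ : ℕ))
    calc n • (s j₀).degree + ((j₀:ℕ) : WithBot ℕ) ≤ vheight n s := le_vheight s j₀
      _ < vheight n r := h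
      _ = n • (r j₀).degree + ((j₀:ℕ) : WithBot ℕ) := hvr'
  have key : n • ((fun jj => r jj - s jj) j₀).degree + ((j₀:ℕ) : WithBot ℕ) = vheight n r := by
    show n • (r j₀ - s j₀).degree + ((j₀:ℕ) : WithBot ℕ) = vheight n r
    rw [degree_sub_eq_left_of_degree_lt hdeg, hvr']
  calc vheight n r = _ := key.symm
    _ ≤ vheight n (fun jj => r jj - s jj) := le_vheight (fun jj => r jj - s jj) j₀

lemma vh_C_mul {n : ℕ} {a : ℂ} (ha : a ≠ 0) (r : Fin n → Polynomial ℂ) :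
    vheight n (fun jj => C a * r jj) = vheight n r :=
  Finset.sup_congr rfl fun j _ => by rw [degree_C_mul ha]

lemma vh_X_mul {n : ℕ} (hn : 0 < n) (r : Fin n → Polynomial ℂ) :
    vheight n (fun jj => X * r jj) = vheight n r + ((n : ℕ) : WithBot ℕ) := by
  unfold vheight
  rw [Finset.comp_sup_eq_sup_comp (fun x => x + ((n:ℕ) : WithBot ℕ))
    (fun x y => (max_add_add_right x y _).symm) (WithBot.bot_add _)]
  refine Finset.sup_congr rfl fun j _ => ?_
  simp only [Function.comp]
  rw [degree_mul, degree_X]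
  cases hd : (r j).degree with
  | bot =>
    simp [WithBot.add_bot, WithBot.bot_add, nsmul_bot hn]
  | coe c =>
    rw [← Nat.cast_withBot c,
      show (1 : WithBot ℕ) + ((c:ℕ) : WithBot ℕ) = ((1 + c : ℕ) : WithBot ℕ) by
        rw [Nat.cast_add, Nat.cast_one],
      nsmul_coe, nsmul_coe, ← Nat.cast_add, ← Nat.cast_add, ← Nat.cast_add, Nat.cast_inj]
    ring

set_option maxHeartbeats 2000000 in
lemma vh_init {n : ℕ} (hn : 0 < n) (i₀ : Fin n) (f : Fin n → ℂ) (h0 : ∀ jj, i₀ < jj → f jj = 0)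
    (hne : f i₀ ≠ 0) : vheight n (fun jj => C (f jj)) = (((i₀ : ℕ) : ℕ) : WithBot ℕ) := by
  refine le_antisymm (Finset.sup_le fun jj _ => ?_) ?_
  · show n • (C (f jj)).degree + ((jj:ℕ) : WithBot ℕ) ≤ _
    rcases le_or_gt jj i₀ with h | h
    · calc n • (C (f jj)).degree + ((jj:ℕ) : WithBot ℕ)
          ≤ n • 0 + ((jj:ℕ) : WithBot ℕ) := add_le_add_left (nsmul_mono degree_C_le) _
        _ = ((jj:ℕ) : WithBot ℕ) := by rw [smul_zero, zero_add]
        _ ≤ (((i₀:ℕ) : ℕ) : WithBot ℕ) := Nat.cast_le.mpr h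
    · rw [h0 jj h, map_zero, degree_zero, nsmul_bot hn, WithBot.bot_add]
      exact bot_le
  · have key : n • ((fun jj => C (f jj)) i₀).degree + ((i₀:ℕ) : WithBot ℕ)
        = (((i₀:ℕ):ℕ) : WithBot ℕ) := by
      show n • (C (f i₀)).degree + ((i₀:ℕ) : WithBot ℕ) = _
      rw [degree_C hne, smul_zero, zero_add]
    calc (((i₀:ℕ):ℕ) : WithBot ℕ) = _ := key.symm
      _ ≤ _ := le_vheight (fun jj => C (f jj)) i₀

/-- Every nonnegative integer is the height of some p_k or of some z^l·q_j. -/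
theorem stmt12
    (n N : ℕ) (hn : 0 < n) (hnN : n < N)
    (A : Matrix (Fin N) (Fin N) ℝ) (m : ℕ → ℕ)
    (hA : MatrixClassM n N A m)
    (T : Matrix (Fin n) (Fin n) ℝ)
    (hT_upper : ∀ i j : Fin n, j < i → T i j = 0)
    (hT_diag : ∀ j : Fin n, T j j ≠ 0)
    (φ : Fin n → Fin N → Polynomial ℂ)
    (hφ_init : ∀ (j : Fin n) (i : Fin n),
      φ j (Fin.castLE (le_of_lt hnN) i) = C ((T j i : ℂ)))
    (hφ_rec : ∀ (j : Fin n) (k : Fin N),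
      (∀ i, 1 ≤ i → i ≤ n → m i ≠ (k : ℕ) + 1) →
      ∑ l, C ((A k l : ℂ)) * φ j l = X * φ j k)
    (Q : Fin n → Fin n → Polynomial ℂ)
    (hQ : ∀ (j i : Fin n) (k : Fin N), (k : ℕ) + 1 = m ((i : ℕ) + 1) →
      Q j i = X * φ j k - ∑ l, C ((A k l : ℂ)) * φ j l)
    :
    ∀ s : ℕ,
      (∃ k : Fin N, vheight n (fun jj => φ jj k) = (s : WithBot ℕ)) ∨
      (∃ (j : Fin n) (l : ℕ),
        (s : WithBot ℕ) = vheight n (fun jj => Q jj j) + ((n * l : ℕ) : WithBot ℕ)) := by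
  obtain ⟨hsym, hband, hm0, hmN, hmono, hm1, hmle, hdpos, hdzero⟩ := hA
  have hsymm : ∀ a b : Fin N, A a b = A b a := fun a b =>
    ((Matrix.transpose_apply A a b).symm.trans (congrFun (congrFun hsym a) b)).symm
  -- the height of p_k equals hgt (k+1)
  have main : ∀ K : ℕ, ∀ k : Fin N, (k : ℕ) = K →
      vheight n (fun jj => φ jj k) = ((hgt n m ((k:ℕ)+1) : ℕ) : WithBot ℕ) := by
    intro K
    induction K using Nat.strong_induction_on with
    | _ K ih =>
      intro k hkK
      subst hkK
      rcases lt_or_ge (k:ℕ) n with hsmall | hbig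
      · -- initial segment: φ jj k = C (T jj k)
        have hval : ∀ jj : Fin n, φ jj k = C ((T jj ⟨(k:ℕ), hsmall⟩ : ℝ) : ℂ) := by
          intro jj
          have hcast : Fin.castLE (le_of_lt hnN) ⟨(k:ℕ), hsmall⟩ = k := by
            apply Fin.ext; rfl
          conv_lhs => rw [← hcast]
          exact hφ_init jj ⟨(k:ℕ), hsmall⟩
        have h0 : ∀ jj, (⟨(k:ℕ), hsmall⟩ : Fin n) < jj →
            ((T jj ⟨(k:ℕ), hsmall⟩ : ℝ) : ℂ) = 0 := by
          intro jj hlt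
          rw [hT_upper jj ⟨(k:ℕ), hsmall⟩ hlt, Complex.ofReal_zero]
        have hne : ((T (⟨(k:ℕ), hsmall⟩ : Fin n) ⟨(k:ℕ), hsmall⟩ : ℝ) : ℂ) ≠ 0 :=
          Complex.ofReal_ne_zero.mpr (hT_diag _)
        have hvi := vh_init hn (⟨(k:ℕ), hsmall⟩ : Fin n)
          (fun jj => ((T jj ⟨(k:ℕ), hsmall⟩ : ℝ) : ℂ)) h0 hne
        simp only [hval]
        rw [hgt_le m (by omega)]
        rw [show (k:ℕ)+1-1 = (((⟨(k:ℕ), hsmall⟩ : Fin n) : ℕ) : ℕ) from by simp]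
        exact hvi
      · -- recursive step
        have hkN := k.isLt
        have hiN : (k:ℕ) + 1 ≤ N := by omega
        have hni : n < (k:ℕ) + 1 := by omega
        have hgle := gfun_le n m ((k:ℕ)+1)
        have hlow := gfun_lower hmono hm0 hni
        have hup := gfun_upper hn hmono hmN hiN
        set c := gfun n m ((k:ℕ)+1) with hcdef
        have hcn : c < n := by omega
        have hσ1 : 1 ≤ (k:ℕ) + 1 - (n - c) := by omega
        have hσk : (k:ℕ) + 1 - (n - c) - 1 < N := by omega
        set k₀ : Fin N := ⟨(k:ℕ) + 1 - (n - c) - 1, hσk⟩ with hk₀def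
        have hk₀v : (k₀:ℕ) + 1 = (k:ℕ) + 1 - (n - c) := by
          simp only [hk₀def]; omega
        have hmc : m c < (k₀:ℕ) + 1 := by omega
        have hmc2 : (k₀:ℕ) + 1 < m (c+1) := by omega
        have hexc : ∀ t, 1 ≤ t → t ≤ n → m t ≠ (k₀:ℕ) + 1 := by
          intro t ht1 htn
          rcases le_or_gt t c with h | h
          · have := mlin hmono t c h (by omega); omega
          · have := mlin hmono (c+1) t h htn; omega
        have hpos : 0 < A k k₀ := hdpos c hcn k₀ k (by omega) hmc hmc2
        have hane : ((A k₀ k : ℝ) : ℂ) ≠ 0 := by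
          rw [hsymm k₀ k]; exact Complex.ofReal_ne_zero.mpr (ne_of_gt hpos)
        have heq : (fun jj => C ((A k₀ k : ℂ)) * φ jj k)
            = (fun jj => X * φ jj k₀ -
                ∑ l ∈ Finset.univ.erase k, C ((A k₀ l : ℂ)) * φ jj l) := by
          funext jj
          have hrec := hφ_rec jj k₀ hexc
          have hsplit := Finset.sum_erase_add Finset.univ
            (fun l => C ((A k₀ l : ℂ)) * φ jj l) (Finset.mem_univ k)
          rw [hrec] at hsplit
          linear_combination hsplit
        have hsum : vheight n (fun jj =>
              ∑ l ∈ Finset.univ.erase k, C ((A k₀ l : ℂ)) * φ jj l)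
            < ((hgt n m ((k:ℕ)+1) : ℕ) : WithBot ℕ) := by
          apply vh_sum_lt hn
          intro l hl
          by_cases hAl : A k₀ l = 0
          · have hz : (fun jj => C ((A k₀ l : ℂ)) * φ jj l)
                = (fun _ : Fin n => (0 : Polynomial ℂ)) := by
              funext jj; rw [hAl]; simp
            rw [hz, vh_zero hn]
            exact_mod_cast WithBot.bot_lt_coe _
          · have hlk : (l:ℕ) < (k:ℕ) := by
              rcases lt_trichotomy (l:ℕ) (k:ℕ) with h | h | h
              · exact h
              · exact absurd (Fin.ext h) (Finset.ne_of_mem_erase hl)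
              · exfalso
                rcases le_or_gt (l:ℕ) ((k₀:ℕ) + n) with hb | hb
                · have hlN := l.isLt
                  have hj' : (l:ℕ) = (k₀:ℕ) + (n - ((k₀:ℕ) + n - (l:ℕ))) := by omega
                  have hj'lt : (k₀:ℕ) + n - (l:ℕ) < n := by omega
                  have hj'c : (k₀:ℕ) + n - (l:ℕ) + 1 ≤ c := by omega
                  have hmj' := mlin hmono ((k₀:ℕ) + n - (l:ℕ) + 1) c hj'c (by omega)
                  have hz := hdzero ((k₀:ℕ) + n - (l:ℕ)) hj'lt k₀ l hj'
                    (by omega) (by omega)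
                  exact hAl (by rw [hsymm k₀ l]; exact hz)
                · exact hAl (hband k₀ l (lt_abs.mpr (Or.inr (by push_cast; omega))))
            have hih := ih (l:ℕ) (by omega) l rfl
            have hCl : vheight n (fun jj => C ((A k₀ l : ℂ)) * φ jj l)
                = vheight n (fun jj => φ jj l) :=
              vh_C_mul (Complex.ofReal_ne_zero.mpr hAl) (fun jj => φ jj l)
            rw [hCl, hih]
            have hmono' := hgt_mono (n := n) (N := N) (m := m) hn ((k:ℕ)+1) hiN
              ((l:ℕ)+1) (by omega) (by omega)
            exact_mod_cast hmono'
        have hXv : vheight n (fun jj => X * φ jj k₀)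
            = ((hgt n m ((k:ℕ)+1) : ℕ) : WithBot ℕ) := by
          rw [vh_X_mul hn (fun jj => φ jj k₀), ih ((k₀:ℕ)) (by omega) k₀ rfl]
          rw [← Nat.cast_add]
          rw [hgt_gt m hn hni]
          rw [← hcdef, hk₀v]
        calc vheight n (fun jj => φ jj k)
            = vheight n (fun jj => C ((A k₀ k : ℂ)) * φ jj k) :=
              (vh_C_mul hane (fun jj => φ jj k)).symm
          _ = vheight n (fun jj => X * φ jj k₀ -
                ∑ l ∈ Finset.univ.erase k, C ((A k₀ l : ℂ)) * φ jj l) := by rw [heq]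
          _ = vheight n (fun jj => X * φ jj k₀) :=
              vh_sub_eq hn (by rw [hXv]; exact hsum)
          _ = _ := hXv
  -- the height of q_t
  have qval : ∀ t : Fin n, vheight n (fun jj => Q jj t)
      = ((hgt n m (m ((t:ℕ)+1)) + n : ℕ) : WithBot ℕ) := by
    intro t
    have ht1 : 1 ≤ (t:ℕ) + 1 := by omega
    have htn : (t:ℕ) + 1 ≤ n := by have := t.isLt; omega
    have hmt1N : m ((t:ℕ)+1) ≤ N := by
      have := mlin hmono ((t:ℕ)+1) n htn (le_refl n); omega
    have hmt11 : 1 ≤ m ((t:ℕ)+1) := by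
      have := m_ge_self hm0 hmono ((t:ℕ)+1) htn; omega
    set kq : Fin N := ⟨m ((t:ℕ)+1) - 1, by omega⟩ with hkqdef
    have hkq : (kq:ℕ) + 1 = m ((t:ℕ)+1) := by
      simp only [hkqdef]; omega
    have hQt : (fun jj => Q jj t)
        = (fun jj => X * φ jj kq - ∑ l, C ((A kq l : ℂ)) * φ jj l) := by
      funext jj
      exact hQ jj t kq hkq
    rw [hQt]
    have hXv : vheight n (fun jj => X * φ jj kq)
        = ((hgt n m (m ((t:ℕ)+1)) + n : ℕ) : WithBot ℕ) := by
      rw [vh_X_mul hn (fun jj => φ jj kq), main ((kq:ℕ)) kq rfl]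
      rw [← Nat.cast_add, hkq]
    have hsum : vheight n (fun jj => ∑ l, C ((A kq l : ℂ)) * φ jj l)
        < ((hgt n m (m ((t:ℕ)+1)) + n : ℕ) : WithBot ℕ) := by
      apply vh_sum_lt hn
      intro l _
      by_cases hAl : A kq l = 0
      · have hz : (fun jj => C ((A kq l : ℂ)) * φ jj l)
            = (fun _ : Fin n => (0 : Polynomial ℂ)) := by
          funext jj; rw [hAl]; simp
        rw [hz, vh_zero hn]
        exact_mod_cast WithBot.bot_lt_coe _
      · have hlN := l.isLt
        have hlb : (l:ℕ) + 1 + ((t:ℕ)+1) ≤ m ((t:ℕ)+1) + n := by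
          by_contra hcon
          push_neg at hcon
          rcases le_or_gt (l:ℕ) ((kq:ℕ) + n) with hb | hb
          · have hj' : (l:ℕ) = (kq:ℕ) + (n - ((kq:ℕ) + n - (l:ℕ))) := by omega
            have hj'lt : (kq:ℕ) + n - (l:ℕ) < n := by omega
            have hj'c : (kq:ℕ) + n - (l:ℕ) + 1 ≤ (t:ℕ) + 1 := by omega
            have hmj' := mlin hmono ((kq:ℕ) + n - (l:ℕ) + 1) ((t:ℕ)+1) hj'c htn
            have hz := hdzero ((kq:ℕ) + n - (l:ℕ)) hj'lt kq l hj'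
              (by omega) (by omega)
            exact hAl (by rw [hsymm kq l]; exact hz)
          · exact hAl (hband kq l (lt_abs.mpr (Or.inr (by push_cast; omega))))
        have hCl : vheight n (fun jj => C ((A kq l : ℂ)) * φ jj l)
            = vheight n (fun jj => φ jj l) :=
          vh_C_mul (Complex.ofReal_ne_zero.mpr hAl) (fun jj => φ jj l)
        rw [hCl, main ((l:ℕ)) l rfl]
        have hlt : hgt n m ((l:ℕ)+1) < hgt n m (m ((t:ℕ)+1)) + n := by
          rcases le_or_gt ((l:ℕ)+1) (m ((t:ℕ)+1)) with h | h
          · have := hgt_le_mono (n := n) (N := N) (m := m) hn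
              (i := (l:ℕ)+1) (i' := m ((t:ℕ)+1)) (by omega) h hmt1N
            omega
          · exact hgt_q hn hm0 hmN hmono ht1 htn h (by omega) (by omega)
        exact_mod_cast hlt
    exact (vh_sub_eq hn (by rw [hXv]; exact hsum)).trans hXv
  -- conclusion via the covering lemma
  intro s
  rcases hgt_cover (N := N) hn hnN hm0 hmN hmono hmle s with
    ⟨i, h1, hN2, hvi⟩ | ⟨t, l, ht1, htn, hval⟩
  · left
    refine ⟨⟨i-1, by omega⟩, ?_⟩
    have hm := main (i-1) ⟨i-1, by omega⟩ rfl
    rw [hm]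
    have : ((⟨i-1, by omega⟩ : Fin N) : ℕ) + 1 = i := by simp; omega
    rw [this, hvi]
  · right
    refine ⟨⟨t-1, by omega⟩, l, ?_⟩
    have hq := qval ⟨t-1, by omega⟩
    have htt : ((⟨t-1, by omega⟩ : Fin n) : ℕ) + 1 = t := by simp; omega
    rw [htt] at hq
    rw [hq, ← Nat.cast_add, Nat.cast_inj]
    omega
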